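/- (Fejér monotonicity of the algorithm.) In the setting of the algorithm described in the context, for every x* ∈ S* ∩ X, every k ∈ ℕ and every i ∈ {1,…,m}, one has ‖z_{i+1}^k − x*‖ ≤ ‖z_i^k − x*‖; consequently ‖x^{k+1} − x*‖ ≤ ‖x^k − x*‖ for all k, i.e., the sequence (x^k)_{k∈ℕ} is Fejér convergent to S* ∩ X, and hence (x^k) is bounded. -/

import Mathlib

open scoped RealInnerProductSpace
open Filter

/-- `T` is a monotone set-valued operator. -/
def IsMonotoneOp {n : ℕ}
    (T : EuclideanSpace ℝ (Fin n) → Set (EuclideanSpace ℝ (Fin n))) : Prop :=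
  ∀ x y u v, u ∈ T x → v ∈ T y → ⟪x - y, u - v⟫ ≥ 0

/-- `T` is a maximal monotone set-valued operator. -/
def IsMaximalMonotoneOp {n : ℕ}
    (T : EuclideanSpace ℝ (Fin n) → Set (EuclideanSpace ℝ (Fin n))) : Prop :=
  IsMonotoneOp T ∧
    ∀ x u, (∀ y v, v ∈ T y → ⟪x - y, u - v⟫ ≥ 0) → u ∈ T x

/-- The sequence `x` is Fejér convergent to the set `S`. -/
def FejerConvergent {n : ℕ}
    (x : ℕ → EuclideanSpace ℝ (Fin n)) (S : Set (EuclideanSpace ℝ (Fin n))) : Prop :=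
  ∀ q ∈ S, ∃ k₀ : ℕ, ∀ k ≥ k₀, ‖x (k + 1) - q‖ ≤ ‖x k - q‖


lemma proj_contract {n : ℕ} {C : Set (EuclideanSpace ℝ (Fin n))} (hC : Convex ℝ C)
    {w c q : EuclideanSpace ℝ (Fin n)} (hc : c ∈ C) (hq : q ∈ C)
    (hmin : ∀ y ∈ C, ‖c - w‖ ≤ ‖y - w‖) : ‖c - q‖ ≤ ‖w - q‖ := by
  have key : 0 ≤ 2 * ⟪c - w, q - c⟫ := by
    have hstep : ∀ t : ℝ, 0 < t → t ≤ 1 → 0 ≤ 2 * ⟪c - w, q - c⟫ + t * ‖q - c‖ ^ 2 := by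
      intro t ht ht1
      have hyC : c + t • (q - c) ∈ C := hC.add_smul_sub_mem hc hq ⟨le_of_lt ht, ht1⟩
      have h1 := hmin _ hyC
      have h2 : ‖c - w‖ ^ 2 ≤ ‖(c - w) + t • (q - c)‖ ^ 2 := by
        have he : c + t • (q - c) - w = (c - w) + t • (q - c) := by abel
        rw [← he]
        exact pow_le_pow_left₀ (norm_nonneg _) h1 2
      rw [norm_add_sq_real, real_inner_smul_right, norm_smul, mul_pow] at h2
      have habs : ‖t‖ ^ 2 = t ^ 2 := by
        rw [Real.norm_eq_abs, sq_abs]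
      rw [habs] at h2
      nlinarith [h2]
    by_contra hlt
    push_neg at hlt
    rcases le_or_gt (‖q - c‖ ^ 2) 0 with hb | hb
    · have := hstep 1 one_pos le_rfl
      nlinarith
    · set a := 2 * ⟪c - w, q - c⟫ with ha
      set t := min 1 (-a / (2 * ‖q - c‖ ^ 2)) with htdef
      have hta : 0 < -a / (2 * ‖q - c‖ ^ 2) := div_pos (by linarith) (by positivity)
      have ht : 0 < t := lt_min one_pos hta
      have ht1 : t ≤ 1 := min_le_left _ _
      have hmain := hstep t ht ht1
      have htle : t ≤ -a / (2 * ‖q - c‖ ^ 2) := min_le_right _ _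
      have h3 : t * ‖q - c‖ ^ 2 ≤ (-a / (2 * ‖q - c‖ ^ 2)) * ‖q - c‖ ^ 2 :=
        mul_le_mul_of_nonneg_right htle hb.le
      have h4 : (-a / (2 * ‖q - c‖ ^ 2)) * ‖q - c‖ ^ 2 = -a / 2 := by
        rw [div_mul_eq_mul_div, div_eq_div_iff (by positivity) two_ne_zero]; ring
      nlinarith
  have key2 : ⟪w - c, q - c⟫ ≤ 0 := by
    have hwc : w - c = -(c - w) := by abel
    rw [hwc, inner_neg_left]; linarith
  have hsq : ‖q - c‖ ^ 2 ≤ ‖w - q‖ ^ 2 := by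
    have he : w - q = (w - c) - (q - c) := by abel
    have hexp : ‖(w - c) - (q - c)‖ ^ 2
        = ‖w - c‖ ^ 2 - 2 * ⟪w - c, q - c⟫ + ‖q - c‖ ^ 2 := norm_sub_sq_real _ _
    rw [he, hexp]
    nlinarith [norm_nonneg (w - c), sq_nonneg ‖w - c‖]
  have hrev : ‖c - q‖ = ‖q - c‖ := norm_sub_rev _ _
  rw [hrev]
  nlinarith [norm_nonneg (q - c), norm_nonneg (w - q)]

lemma halfspace_convex {n : ℕ} (v a : EuclideanSpace ℝ (Fin n)) :
    Convex ℝ {y : EuclideanSpace ℝ (Fin n) | ⟪v, y - a⟫ ≤ 0} := by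
  intro y1 h1 y2 h2 s t hs ht hst
  simp only [Set.mem_setOf_eq] at *
  have he : s • y1 + t • y2 - a = s • (y1 - a) + t • (y2 - a) := by
    match_scalars <;> simp <;> linarith
  rw [he, inner_add_right, real_inner_smul_right, real_inner_smul_right]
  nlinarith

theorem algorithm_fejer_monotone {n m : ℕ} (hm : 1 ≤ m)
    (A : ℕ → EuclideanSpace ℝ (Fin n) → EuclideanSpace ℝ (Fin n))
    (B : ℕ → EuclideanSpace ℝ (Fin n) → Set (EuclideanSpace ℝ (Fin n)))
    (hA_cont : ∀ i ∈ Finset.Icc 1 m, Continuous (A i))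
    (hA_mono : ∀ i ∈ Finset.Icc 1 m, ∀ x y, ⟪A i x - A i y, x - y⟫ ≥ 0)
    (hB_max : ∀ i ∈ Finset.Icc 1 m, IsMaximalMonotoneOp (B i))
    (Sstar : Set (EuclideanSpace ℝ (Fin n)))
    (hSstar : Sstar = ⋂ i ∈ Finset.Icc 1 m, {x | -A i x ∈ B i x})
    (X : Set (EuclideanSpace ℝ (Fin n)))
    (hXne : X.Nonempty) (hXcl : IsClosed X) (hXcv : Convex ℝ X)
    (hXdom : ∀ i ∈ Finset.Icc 1 m, ∀ x ∈ X, (B i x).Nonempty)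
    (hSX : (Sstar ∩ X).Nonempty)
    (θ δ : ℝ) (hθ : θ ∈ Set.Ioo (0 : ℝ) 1) (hδ : δ ∈ Set.Ioo (0 : ℝ) 1)
    (βlo βhi : ℝ) (hβlo : 0 < βlo) (hβle : βlo ≤ βhi)
    (β : ℕ → ℝ) (hβ : ∀ k, β k ∈ Set.Icc βlo βhi)
    (R : ℝ) (hR : 0 < R)
    (x : ℕ → EuclideanSpace ℝ (Fin n))
    (z J xbar ubar : ℕ → ℕ → EuclideanSpace ℝ (Fin n))
    (α : ℕ → ℕ → ℝ)
    (p : ℕ → ℕ → EuclideanSpace ℝ (Fin n))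
    (PX : EuclideanSpace ℝ (Fin n) → EuclideanSpace ℝ (Fin n))
    (hPX : ∀ w, PX w ∈ X ∧ ∀ y ∈ X, ‖PX w - w‖ ≤ ‖y - w‖)
    (hxX : ∀ k, x k ∈ X)
    (hzX : ∀ k, ∀ i ∈ Finset.Icc 1 (m + 1), z k i ∈ X)
    (hz1 : ∀ k, z k 1 = x k)
    (hxk1 : ∀ k, x (k + 1) = z k (m + 1))
    (hα : ∀ k, ∀ i ∈ Finset.Icc 1 m, α k i ∈ Set.Ioc (0 : ℝ) 1)
    (hJ : ∀ k, ∀ i ∈ Finset.Icc 1 m,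
      (β k)⁻¹ • (z k i - β k • A i (z k i) - J k i) ∈ B i (J k i))
    (hstop : ∀ k, ∀ i ∈ Finset.Icc 1 m, z k i = J k i →
      z k (i + 1) = z k i ∧ xbar k i = z k i ∧
        ubar k i ∈ B i (z k i) ∧ ‖ubar k i‖ ≤ R)
    (hsearch : ∀ k, ∀ i ∈ Finset.Icc 1 m, z k i ≠ J k i →
      ∃ j : ℕ, α k i = θ ^ j ∧
        xbar k i = α k i • J k i + (1 - α k i) • z k i ∧
        ubar k i ∈ B i (xbar k i) ∧ ‖ubar k i‖ ≤ R ∧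
        ⟪A i (xbar k i) + ubar k i, z k i - J k i⟫ ≥
          (δ / β k) * ‖z k i - J k i‖ ^ 2 ∧
        ∀ j' < j, ∀ u ∈ B i (θ ^ j' • J k i + (1 - θ ^ j') • z k i), ‖u‖ ≤ R →
          ⟪A i (θ ^ j' • J k i + (1 - θ ^ j') • z k i) + u, z k i - J k i⟫ <
            (δ / β k) * ‖z k i - J k i‖ ^ 2)
    (hBne : ∀ k, ∀ i ∈ Finset.Icc 1 m, ∀ j : ℕ,
      ∃ u ∈ B i (θ ^ j • J k i + (1 - θ ^ j) • z k i), ‖u‖ ≤ R)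
    (hp : ∀ k, ∀ i ∈ Finset.Icc 1 m,
      p k i ∈ {y : EuclideanSpace ℝ (Fin n) |
          ⟪A i (xbar k i) + ubar k i, y - xbar k i⟫ ≤ 0} ∧
        ∀ y ∈ {y : EuclideanSpace ℝ (Fin n) |
            ⟪A i (xbar k i) + ubar k i, y - xbar k i⟫ ≤ 0},
          ‖p k i - z k i‖ ≤ ‖y - z k i‖)
    (hznext : ∀ k, ∀ i ∈ Finset.Icc 1 m, z k (i + 1) = PX (p k i)) :
    (∀ xs ∈ Sstar ∩ X, ∀ k : ℕ, ∀ i ∈ Finset.Icc 1 m,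
        ‖z k (i + 1) - xs‖ ≤ ‖z k i - xs‖) ∧
      (∀ xs ∈ Sstar ∩ X, ∀ k : ℕ, ‖x (k + 1) - xs‖ ≤ ‖x k - xs‖) ∧
      FejerConvergent x (Sstar ∩ X) ∧
      Bornology.IsBounded (Set.range x) := by

  have main : ∀ xs ∈ Sstar ∩ X, ∀ k : ℕ, ∀ i ∈ Finset.Icc 1 m,
      ‖z k (i + 1) - xs‖ ≤ ‖z k i - xs‖ := by
    intro xs hxs k i hi
    obtain ⟨hxsS, hxsX⟩ := hxs
    by_cases hcase : z k i = J k i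
    · rw [(hstop k i hi hcase).1]
    · obtain ⟨j, hαj, hxb, hub, hubR, hineq, hls⟩ := hsearch k i hi hcase
      -- xs is a zero of A i + B i
      have hzero : -A i xs ∈ B i xs := by
        rw [hSstar] at hxsS
        exact Set.mem_iInter₂.1 hxsS i hi
      -- xs lies in the halfspace
      have hxsH : xs ∈ {y : EuclideanSpace ℝ (Fin n) |
          ⟪A i (xbar k i) + ubar k i, y - xbar k i⟫ ≤ 0} := by
        have hBmono := (hB_max i hi).1 (xbar k i) xs (ubar k i) (-A i xs) hub hzero
        have hAmono := hA_mono i hi (xbar k i) xs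
        have h5 : 0 ≤ ⟪A i (xbar k i) + ubar k i, xbar k i - xs⟫ := by
          have e1 : A i (xbar k i) + ubar k i
              = (A i (xbar k i) - A i xs) + (A i xs + ubar k i) := by abel
          have e2 : ubar k i - -A i xs = A i xs + ubar k i := by abel
          rw [e1, inner_add_left]
          rw [e2, ← real_inner_comm (xbar k i - xs)] at hBmono
          exact add_nonneg hAmono hBmono
        have hneg : xs - xbar k i = -(xbar k i - xs) := by abel
        simp only [Set.mem_setOf_eq, hneg, inner_neg_right]
        linarith
      obtain ⟨hpH, hpmin⟩ := hp k i hi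
      have step1 : ‖p k i - xs‖ ≤ ‖z k i - xs‖ :=
        proj_contract (halfspace_convex _ _) hpH hxsH hpmin
      have step2 : ‖z k (i + 1) - xs‖ ≤ ‖p k i - xs‖ := by
        rw [hznext k i hi]
        exact proj_contract hXcv (hPX (p k i)).1 hxsX (hPX (p k i)).2
      exact le_trans step2 step1
  have step : ∀ xs ∈ Sstar ∩ X, ∀ k : ℕ, ‖x (k + 1) - xs‖ ≤ ‖x k - xs‖ := by
    intro xs hxs k
    have chain : ∀ i : ℕ, i ≤ m → ‖z k (1 + i) - xs‖ ≤ ‖z k 1 - xs‖ := by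
      intro i hile
      induction i with
      | zero => simp
      | succ i ih =>
        have hi' : 1 + i ∈ Finset.Icc 1 m := by
          simp only [Finset.mem_Icc]; omega
        have := main xs hxs k (1 + i) hi'
        have hrw : 1 + (i + 1) = (1 + i) + 1 := by omega
        rw [hrw]
        exact le_trans this (ih (by omega))
    have := chain m le_rfl
    rw [hxk1 k, hz1 k] at *
    have hrw : m + 1 = 1 + m := by omega
    rw [hrw]
    exact this
  refine ⟨main, step, ?_, ?_⟩
  · intro q hq
    exact ⟨0, fun k _ => step q hq k⟩
  · obtain ⟨q, hq⟩ := hSX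
    have hb : ∀ k, ‖x k - q‖ ≤ ‖x 0 - q‖ := by
      intro k
      induction k with
      | zero => exact le_rfl
      | succ k ih => exact le_trans (step q hq k) ih
    have hsub : Set.range x ⊆ Metric.closedBall q ‖x 0 - q‖ := by
      rintro _ ⟨k, rfl⟩
      rw [Metric.mem_closedBall, dist_eq_norm]
      exact hb k
    exact (Metric.isBounded_closedBall).subset hsub
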